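/- Let X = S² × S¹ with the involution ρ((a,b,c),u) = ((a,b,c), ū), and let A = {(a,b,0) ∈ S²} × {i,−i}. Suppose g : X → X is continuous, ρ-equivariant (g(ρ(x)) = ρ(g(x)) for all x), fiber-preserving over the projection π₁ : X → S² (i.e. π₁(g(v,u)) = π₁(g(v,u')) for all v ∈ S² and u,u' ∈ S¹), and Fix(g) = A. Then g maps S² × {1} into S² × {−1} and maps S² × {−1} into S² × {1}. -/

import Mathlib

/-- The unit 2-sphere in `ℝ³`. -/
def Sph2 : Set (ℝ × ℝ × ℝ) := {v | v.1 ^ 2 + v.2.1 ^ 2 + v.2.2 ^ 2 = 1}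

/-- The antipodal map `v ↦ -v` on the 2-sphere. -/
def antipS2 (v : Sph2) : Sph2 :=
  ⟨(-(v : ℝ × ℝ × ℝ).1, -(v : ℝ × ℝ × ℝ).2.1, -(v : ℝ × ℝ × ℝ).2.2), by
    have h := v.2
    simp only [Sph2, Set.mem_setOf_eq] at h ⊢
    nlinarith [h]⟩

/-- The unit circle in `ℂ`. -/
def SphC : Set ℂ := {z | ‖z‖ = 1}

/-- Complex conjugation on the unit circle. -/
def conjC (u : SphC) : SphC :=
  ⟨(starRingEnd ℂ) (u : ℂ), by
    have h := u.2
    simp only [SphC, Set.mem_setOf_eq] at h ⊢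
    simpa using h⟩

/-- The total space `X = S² × S¹`. -/
def XS2S1 : Type := Sph2 × SphC

noncomputable instance : TopologicalSpace XS2S1 := by unfold XS2S1; infer_instance

/-- The involution `ρ((a,b,c),u) = ((a,b,c), ū)` on `X = S² × S¹`. -/
def rhoX (x : XS2S1) : XS2S1 := (x.1, conjC x.2)

/-- The map `f((a,b,c),u) = ((-a,-b,-c),u)` on `X = S² × S¹`. -/
def fX (x : XS2S1) : XS2S1 := (antipS2 x.1, x.2)

/-- The subset `A = {(a,b,0) ∈ S²} × {i,-i}` of `X = S² × S¹`. -/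
def AX : Set XS2S1 :=
  {x | (x.1 : ℝ × ℝ × ℝ).2.2 = 0 ∧ ((x.2 : ℂ) = Complex.I ∨ (x.2 : ℂ) = -Complex.I)}

/-- The point `1` on the unit circle. -/
def oneC : SphC := ⟨1, by simp [SphC]⟩

/-- The point `-1` on the unit circle. -/
def negOneC : SphC := ⟨-1, by simp [SphC]⟩

/-- Any continuous `ρ`-equivariant fiber-preserving selfmap of `X = S² × S¹` whose fixed
point set is `A = {(a,b,0)} × {i,-i}` maps `S² × {1}` into `S² × {-1}` and
`S² × {-1}` into `S² × {1}`. -/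
lemma sph2_isConnected : IsConnected Sph2 := by
  classical
  set E := EuclideanSpace ℝ (Fin 3)
  have hrank : 1 < Module.rank ℝ E := by
    have h1 : (Module.finrank ℝ E : Cardinal) = Module.rank ℝ E := Module.finrank_eq_rank ℝ E
    rw [← h1, show Module.finrank ℝ E = 3 from finrank_euclideanSpace_fin]
    norm_num
  have hconn : IsConnected (Metric.sphere (0 : E) 1) :=
    isConnected_sphere hrank 0 zero_le_one
  set F : E → ℝ × ℝ × ℝ := fun x => (x 0, x 1, x 2) with hF
  have hFcont : Continuous F := by
    apply Continuous.prodMk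
    · exact (continuous_apply 0).comp (PiLp.continuous_ofLp 2 _)
    · exact Continuous.prodMk ((continuous_apply 1).comp (PiLp.continuous_ofLp 2 _))
        ((continuous_apply 2).comp (PiLp.continuous_ofLp 2 _))
  have himg : F '' (Metric.sphere (0 : E) 1) = Sph2 := by
    ext p
    constructor
    · rintro ⟨x, hx, rfl⟩
      have hx' : ‖x‖ = 1 := by simpa using hx
      have hn := EuclideanSpace.norm_eq x
      rw [hx'] at hn
      have h0 : (0:ℝ) ≤ ∑ i : Fin 3, ‖x i‖ ^ 2 :=
        Finset.sum_nonneg fun i _ => sq_nonneg _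
      have hsum : ∑ i : Fin 3, ‖x i‖ ^ 2 = 1 := by
        nlinarith [Real.sq_sqrt h0, hn]
      rw [Fin.sum_univ_three] at hsum
      simp only [Real.norm_eq_abs, sq_abs] at hsum
      simpa [Sph2, F] using hsum
    · intro hp
      refine ⟨(WithLp.equiv 2 (Fin 3 → ℝ)).symm ![p.1, p.2.1, p.2.2], ?_, ?_⟩
      · rw [Metric.mem_sphere, dist_zero_right, EuclideanSpace.norm_eq,
          Real.sqrt_eq_one, Fin.sum_univ_three]
        simp only [Real.norm_eq_abs, sq_abs, WithLp.equiv_symm_apply, PiLp.toLp_apply,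
          Matrix.cons_val_zero, Matrix.cons_val_one, Matrix.head_cons,
          Matrix.cons_val_two, Matrix.tail_cons]
        simpa [Sph2] using hp
      · simp [F, WithLp.equiv_symm_apply, PiLp.toLp_apply]
  rw [← himg]
  exact hconn.image F hFcont.continuousOn

instance : ConnectedSpace Sph2 := Subtype.connectedSpace sph2_isConnected

theorem fiber_preserving_map_swaps_fixed_spheres
    (g : XS2S1 → XS2S1) (hcont : Continuous g)
    (hequiv : ∀ x : XS2S1, g (rhoX x) = rhoX (g x))
    (hfib : ∀ (v : Sph2) (u u' : SphC), (g (v, u)).1 = (g (v, u')).1)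
    (hfix : {x : XS2S1 | g x = x} = AX) :
    ∀ v : Sph2, ((g (v, oneC)).2 : ℂ) = -1 ∧ ((g (v, negOneC)).2 : ℂ) = 1 := by
  classical
  set v₀ : Sph2 := ⟨(1, 0, 0), by norm_num [Sph2]⟩ with hv₀
  set iC : SphC := ⟨Complex.I, by simp [SphC]⟩ with hiC
  have hmemA : ((v₀, iC) : XS2S1) ∈ AX := ⟨rfl, Or.inl rfl⟩
  have hfixI : g (v₀, iC) = (v₀, iC) := by
    have : ((v₀, iC) : XS2S1) ∈ {x : XS2S1 | g x = x} := by rw [hfix]; exact hmemA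
    exact this
  -- the key general claim
  have key : ∀ w : SphC, ((w : ℂ) = 1 ∨ (w : ℂ) = -1) →
      ∀ v : Sph2, ((g (v, w)).2 : ℂ) = -(w : ℂ) := by
    intro w hw
    -- w is fixed by conjugation
    have hconjw : conjC w = w := by
      apply Subtype.ext
      rcases hw with h | h <;> simp [conjC, h]
    -- the second coordinate of g (v, w) is always 1 or -1
    have hreal : ∀ v : Sph2, ((g (v, w)).2 : ℂ) = 1 ∨ ((g (v, w)).2 : ℂ) = -1 := by
      intro v
      have h1 : g (rhoX (v, w)) = rhoX (g (v, w)) := hequiv (v, w)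
      have h2 : rhoX ((v, w) : XS2S1) = (v, w) := by
        show ((v, conjC w) : XS2S1) = (v, w)
        rw [hconjw]
      rw [h2] at h1
      have h3 : (g (v, w)).2 = conjC (g (v, w)).2 := congrArg Prod.snd h1
      have h4 : ((g (v, w)).2 : ℂ) = (starRingEnd ℂ) ((g (v, w)).2 : ℂ) :=
        congrArg Subtype.val h3
      set z : ℂ := ((g (v, w)).2 : ℂ) with hz
      have him : z.im = 0 := by
        have := Complex.ext_iff.mp h4
        simp only [Complex.conj_re, Complex.conj_im] at this
        linarith [this.2]
      have hnorm : ‖z‖ = 1 := (g (v, w)).2.2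
      have hsq : z.re ^ 2 = 1 := by
        have := Complex.sq_norm z
        rw [Complex.normSq_apply, him] at this
        have habs : ‖z‖ = 1 := hnorm
        nlinarith [this, habs]
      have hre : z.re = 1 ∨ z.re = -1 := by
        have hmul : (z.re - 1) * (z.re + 1) = 0 := by nlinarith [hsq]
        rcases mul_eq_zero.mp hmul with h | h
        · left; linarith
        · right; linarith
      rcases hre with h | h
      · left; exact Complex.ext_iff.mpr ⟨by simpa using h, by simpa using him⟩
      · right; exact Complex.ext_iff.mpr ⟨by simpa using h, by simpa using him⟩
    -- at v₀ the value is -w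
    have hv0 : ((g (v₀, w)).2 : ℂ) = -(w : ℂ) := by
      have hfirst : (g (v₀, w)).1 = v₀ := by
        have := hfib v₀ w iC
        rw [this, hfixI]
      have hne : ((g (v₀, w)).2 : ℂ) ≠ (w : ℂ) := by
        intro heq
        have hgeq : g (v₀, w) = (v₀, w) := by
          have h2 : (g (v₀, w)).2 = w := Subtype.ext heq
          have hexp : g (v₀, w) = ((g (v₀, w)).1, (g (v₀, w)).2) := rfl
          rw [hexp, hfirst, h2]
        have hA : ((v₀, w) : XS2S1) ∈ AX := by rw [← hfix]; exact hgeq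
        rcases hA.2 with h | h <;> rcases hw with h' | h' <;>
          · rw [h'] at h
            exact absurd (Complex.ext_iff.mp h).2 (by norm_num)
      rcases hreal v₀ with h | h <;> rcases hw with h' | h'
      · exact absurd (h.trans h'.symm) hne
      · rw [h, h']; try norm_num
      · rw [h, h']; try norm_num
      · exact absurd (h.trans h'.symm) hne
    -- the set where the value is -w is clopen and nonempty, hence everything
    have hφ : Continuous (fun v : Sph2 => ((g (v, w)).2 : ℂ)) := by
      have hι : Continuous (fun v : Sph2 => ((v, w) : XS2S1)) :=
        Continuous.prodMk continuous_id continuous_const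
      exact continuous_subtype_val.comp ((continuous_snd.comp hcont).comp hι)
    set S : Set Sph2 := {v : Sph2 | ((g (v, w)).2 : ℂ) = -(w : ℂ)} with hS
    set T : Set Sph2 := {v : Sph2 | ((g (v, w)).2 : ℂ) = (w : ℂ)} with hT
    have hSclosed : IsClosed S := isClosed_eq hφ continuous_const
    have hTclosed : IsClosed T := isClosed_eq hφ continuous_const
    have hST : T = Sᶜ := by
      ext v
      simp only [hS, hT, Set.mem_setOf_eq, Set.mem_compl_iff]
      constructor
      · intro h h'
        rw [h] at h'
        rcases hw with h'' | h'' <;> rw [h''] at h' <;> norm_num at h'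
      · intro h
        rcases hreal v with h1 | h1 <;> rcases hw with h2 | h2
        · rw [h1, h2]
        · exfalso; apply h; rw [h1, h2]; try norm_num
        · exfalso; apply h; rw [h1, h2]; try norm_num
        · rw [h1, h2]
    have hSopen : IsOpen S := by
      have := hTclosed
      rw [hST] at this
      simpa using this.isOpen_compl
    have hSuniv : S = Set.univ := by
      rcases isClopen_iff.mp ⟨hSclosed, hSopen⟩ with h | h
      · exact absurd (h ▸ hv0 : v₀ ∈ (∅ : Set Sph2)) (Set.notMem_empty _)
      · exact h
    intro v
    have : v ∈ S := hSuniv ▸ Set.mem_univ v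
    exact this
  intro v
  constructor
  · have := key oneC (Or.inl rfl) v
    simpa [oneC] using this
  · have := key negOneC (Or.inr rfl) v
    simpa [negOneC] using this
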